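/- The improper integral ∫₀^∞ (exp(ψ(ζ)) − 1) dζ converges and equals 2√2·B/(√(8 + B²) + 2√2 − B). -/

import Mathlib

open Real Set Filter MeasureTheory
open Topology

/-- The paper's explicit Debye-layer solution for positive scaled wall charge
`B > 0`: `ψ(ζ) = 2 log(coth((ζ + c)/√2))` with
`c = (1/√2)·arsinh(2√2/B)`, written with `coth = cosh/sinh`. -/
noncomputable def psiDpos (B ζ : ℝ) : ℝ :=
  2 * Real.log
    (Real.cosh ((ζ + (1 / Real.sqrt 2) * Real.arsinh (2 * Real.sqrt 2 / B)) / Real.sqrt 2) /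
     Real.sinh ((ζ + (1 / Real.sqrt 2) * Real.arsinh (2 * Real.sqrt 2 / B)) / Real.sqrt 2))

set_option maxHeartbeats 1000000 in
/-- The Debye-layer correction integral for `G₂`:
`∫₀^∞ (e^{ψ(ζ)} - 1) dζ = 2√2·B/(√(8+B²) + 2√2 - B)`. -/
theorem stmt_9 (B : ℝ) (hB : 0 < B) :
    IntegrableOn (fun ζ => Real.exp (psiDpos B ζ) - 1) (Set.Ioi 0) ∧
    (∫ ζ in Set.Ioi (0:ℝ), (Real.exp (psiDpos B ζ) - 1)) =
      2 * Real.sqrt 2 * B / (Real.sqrt (8 + B ^ 2) + 2 * Real.sqrt 2 - B) := by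
  have h2 : (0:ℝ) < Real.sqrt 2 := by positivity
  have s2 : Real.sqrt 2 ^ 2 = 2 := Real.sq_sqrt (by norm_num)
  set a := Real.arsinh (2 * Real.sqrt 2 / B) with ha_def
  have ha : 0 < a := Real.arsinh_pos_iff.mpr (by positivity)
  set c : ℝ := (1 / Real.sqrt 2) * a with hc_def
  have hc : 0 < c := by positivity
  set u : ℝ → ℝ := fun ζ => (ζ + c) / Real.sqrt 2 with hu_def
  have hu_pos : ∀ ζ, ζ ∈ Ici (0:ℝ) → 0 < u ζ := by
    intro ζ hζ
    have : (0:ℝ) ≤ ζ := hζ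
    simp only [hu_def]
    positivity
  have hs_pos : ∀ ζ, ζ ∈ Ici (0:ℝ) → 0 < Real.sinh (u ζ) :=
    fun ζ hζ => Real.sinh_pos_iff.mpr (hu_pos ζ hζ)
  -- rewrite integrand
  have key : ∀ ζ ∈ Ici (0:ℝ), Real.exp (psiDpos B ζ) - 1 = 1 / Real.sinh (u ζ) ^ 2 := by
    intro ζ hζ
    have hs := hs_pos ζ hζ
    have hch : 0 < Real.cosh (u ζ) := Real.cosh_pos _
    have hpos : 0 < Real.cosh (u ζ) / Real.sinh (u ζ) := div_pos hch hs
    have : Real.exp (psiDpos B ζ) = (Real.cosh (u ζ) / Real.sinh (u ζ)) ^ 2 := by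
      rw [psiDpos, two_mul, Real.exp_add, Real.exp_log hpos, sq]
    rw [this]
    have hid : Real.cosh (u ζ) ^ 2 - Real.sinh (u ζ) ^ 2 = 1 := Real.cosh_sq_sub_sinh_sq (u ζ)
    rw [div_pow, div_sub_one (by positivity), div_eq_div_iff (by positivity) (by positivity)]
    linear_combination (Real.sinh (u ζ) ^ 2) * hid
  -- antiderivative
  set g : ℝ → ℝ := fun ζ => -(Real.sqrt 2 * (Real.cosh (u ζ) / Real.sinh (u ζ))) with hg_def
  have hderiv : ∀ x ∈ Ici (0:ℝ), HasDerivAt g (1 / Real.sinh (u x) ^ 2) x := by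
    intro x hx
    have hs := hs_pos x hx
    have hu' : HasDerivAt u (1 / Real.sqrt 2) x := by
      simpa using ((hasDerivAt_id x).add_const c).div_const (Real.sqrt 2)
    have hch : HasDerivAt (fun ζ => Real.cosh (u ζ)) (Real.sinh (u x) * (1 / Real.sqrt 2)) x :=
      (Real.hasDerivAt_cosh (u x)).comp x hu'
    have hsh : HasDerivAt (fun ζ => Real.sinh (u ζ)) (Real.cosh (u x) * (1 / Real.sqrt 2)) x :=
      (Real.hasDerivAt_sinh (u x)).comp x hu'
    have hq := hch.div hsh hs.ne'
    have hg' := (hq.const_mul (Real.sqrt 2)).neg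
    have hg'' : HasDerivAt g _ x := hg'
    convert hg'' using 1
    have hid : Real.cosh (u x) ^ 2 - Real.sinh (u x) ^ 2 = 1 := Real.cosh_sq_sub_sinh_sq (u x)
    field_simp
    nlinarith [hs, h2, Real.cosh_pos (u x), s2]
  have g'nonneg : ∀ x ∈ Ioi (0:ℝ), 0 ≤ 1 / Real.sinh (u x) ^ 2 := by
    intro x _
    positivity
  -- limit at infinity
  have hu_top : Tendsto u atTop atTop := by
    apply Tendsto.atTop_div_const h2
    exact tendsto_atTop_add_const_right _ c tendsto_id
  have hexp0 : Tendsto (fun ζ => Real.exp (-2 * u ζ)) atTop (𝓝 0) :=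
    Real.tendsto_exp_atBot.comp (Tendsto.const_mul_atTop_of_neg (by norm_num : (-2:ℝ) < 0) hu_top)
  have hcoth_eq : ∀ ζ ∈ Ici (0:ℝ), Real.cosh (u ζ) / Real.sinh (u ζ)
      = (1 + Real.exp (-2 * u ζ)) / (1 - Real.exp (-2 * u ζ)) := by
    intro ζ hζ
    have hup := hu_pos ζ hζ
    have hs := hs_pos ζ hζ
    have he : Real.exp (-2 * u ζ) = Real.exp (-(u ζ)) * Real.exp (-(u ζ)) := by
      rw [← Real.exp_add]; ring_nf
    have hlt1 : Real.exp (-(u ζ)) < 1 := Real.exp_lt_one_iff.mpr (by linarith)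
    have hne1 : (1:ℝ) - Real.exp (-2 * u ζ) ≠ 0 := by
      rw [he]; nlinarith [Real.exp_pos (-(u ζ))]
    have hmul : Real.exp (-(u ζ)) * Real.exp (u ζ) = 1 := by
      rw [← Real.exp_add]; simp
    rw [div_eq_div_iff hs.ne' hne1, Real.cosh_eq, Real.sinh_eq, he]
    linear_combination (-(Real.exp (-(u ζ)))) * hmul
  have hlim : Tendsto g atTop (𝓝 (-(Real.sqrt 2))) := by
    have h1 : Tendsto (fun ζ => (1 + Real.exp (-2 * u ζ)) / (1 - Real.exp (-2 * u ζ)))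
        atTop (𝓝 1) := by
      have hn : Tendsto (fun ζ => 1 + Real.exp (-2 * u ζ)) atTop (𝓝 (1 + 0)) :=
        tendsto_const_nhds.add hexp0
      have hd : Tendsto (fun ζ => 1 - Real.exp (-2 * u ζ)) atTop (𝓝 (1 - 0)) :=
        tendsto_const_nhds.sub hexp0
      have := hn.div hd (by norm_num)
      rw [add_zero, sub_zero, div_one] at this
      exact this
    have h2' : Tendsto (fun ζ => Real.cosh (u ζ) / Real.sinh (u ζ)) atTop (𝓝 1) := by
      apply h1.congr'
      filter_upwards [Ici_mem_atTop (0:ℝ)] with ζ hζ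
      exact (hcoth_eq ζ hζ).symm
    have := (h2'.const_mul (Real.sqrt 2)).neg
    simpa [hg_def] using this
  have hint : IntegrableOn (fun x => 1 / Real.sinh (u x) ^ 2) (Ioi 0) :=
    integrableOn_Ioi_deriv_of_nonneg' hderiv g'nonneg hlim
  have hval : (∫ x in Ioi (0:ℝ), 1 / Real.sinh (u x) ^ 2) = -(Real.sqrt 2) - g 0 :=
    integral_Ioi_of_hasDerivAt_of_nonneg' hderiv g'nonneg hlim
  constructor
  · apply hint.congr_fun _ measurableSet_Ioi
    intro x hx
    exact (key x (Ioi_subset_Ici_self hx)).symm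
  · rw [setIntegral_congr_fun measurableSet_Ioi
      (fun x (hx : x ∈ Ioi (0:ℝ)) => key x (Ioi_subset_Ici_self hx)), hval]
    -- compute g 0
    have hu0 : u 0 = a / 2 := by
      simp only [hu_def, hc_def, zero_add]
      rw [one_div_mul_eq_div, div_div, Real.mul_self_sqrt (by norm_num : (0:ℝ) ≤ 2)]
    set S := Real.sqrt (8 + B ^ 2) with hS_def
    have hS2 : S ^ 2 = 8 + B ^ 2 := Real.sq_sqrt (by positivity)
    have hSpos : 0 < S := Real.sqrt_pos.mpr (by positivity)
    -- coth(a/2) = (cosh a + 1)/ sinh a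
    have hsh2 : 0 < Real.sinh (a / 2) := Real.sinh_pos_iff.mpr (by linarith)
    have hch2 : 0 < Real.cosh (a / 2) := Real.cosh_pos _
    have hsinh_a : Real.sinh a = 2 * Real.sinh (a / 2) * Real.cosh (a / 2) := by
      rw [← Real.sinh_two_mul, show (2:ℝ) * (a / 2) = a by ring]
    have hcosh_a : Real.cosh a = Real.cosh (a / 2) ^ 2 + Real.sinh (a / 2) ^ 2 := by
      rw [← Real.cosh_two_mul, show (2:ℝ) * (a / 2) = a by ring]
    have hsinh_arsinh : Real.sinh a = 2 * Real.sqrt 2 / B := Real.sinh_arsinh _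
    have hcosh_arsinh : Real.cosh a = S / B := by
      rw [ha_def, Real.cosh_arsinh]
      rw [show 1 + (2 * Real.sqrt 2 / B) ^ 2 = (8 + B ^ 2) / B ^ 2 by
        field_simp; nlinarith [s2]]
      rw [Real.sqrt_div (by positivity : (0:ℝ) ≤ 8 + B ^ 2), Real.sqrt_sq hB.le]
    have hcoth_half : Real.cosh (a / 2) / Real.sinh (a / 2) = (S + B) / (2 * Real.sqrt 2) := by
      have hsa : 0 < Real.sinh a := Real.sinh_pos_iff.mpr ha
      rw [div_eq_div_iff hsh2.ne' (by positivity)]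
      have e1 : Real.cosh a + 1 = 2 * Real.cosh (a / 2) ^ 2 := by
        have hid2 := Real.cosh_sq_sub_sinh_sq (a / 2)
        linarith
      have e3 : Real.sinh a * B = 2 * Real.sqrt 2 := by
        rw [hsinh_arsinh]; field_simp
      have e4 : Real.cosh a * B = S := by
        rw [hcosh_arsinh]; field_simp
      have e5 : S + B = 2 * Real.cosh (a / 2) ^ 2 * B := by
        linear_combination B * e1 - e4
      rw [← e3, hsinh_a, e5]
      ring
    have hg0 : g 0 = -((S + B) / 2) := by
      have hsimp : Real.sqrt 2 * ((S + B) / (2 * Real.sqrt 2)) = (S + B) / 2 := by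
        rw [← mul_div_assoc, div_eq_div_iff (by positivity) (by norm_num : (2:ℝ) ≠ 0)]
        ring
      simp only [hg_def]
      rw [hu0, hcoth_half, hsimp]
    rw [hg0]
    have hdpos : 0 < S + 2 * Real.sqrt 2 - B := by
      have h1 : B - 2 * Real.sqrt 2 ≤ |B - 2 * Real.sqrt 2| := le_abs_self _
      have h2' : |B - 2 * Real.sqrt 2| = Real.sqrt ((B - 2 * Real.sqrt 2) ^ 2) :=
        (Real.sqrt_sq_eq_abs _).symm
      have h3 : Real.sqrt ((B - 2 * Real.sqrt 2) ^ 2) < S := by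
        apply Real.sqrt_lt_sqrt (sq_nonneg _)
        nlinarith [s2]
      have : B - 2 * Real.sqrt 2 < S := by rw [h2'] at h1; linarith
      linarith
    rw [eq_div_iff hdpos.ne']
    linear_combination (1/2) * hS2 - 2 * s2
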